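/- For a vector space V over a field of characteristic zero, the image of the left-normed bracketing map V^{⊗n} → T(V), v₁⊗···⊗vₙ ↦ [...[v₁,v₂],...,vₙ], equals the degree-n homogeneous component Lₙ(V) of the free Lie algebra on V, viewed inside the tensor algebra via the canonical embedding. -/

import Mathlib

/-- The left-normed iterated commutator `[...[[a₁,a₂],a₃],...,aₙ]` of a list,
with `[a,b] = a*b - b*a`; `0` for the empty list. -/
def lnbList {A : Type*} [Ring A] : List A → A
  | [] => 0
  | a :: l => l.foldl (fun x y => x * y - y * x) a

attribute [local instance 100] LieRing.ofAssociativeRing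

namespace Stmt2Aux

open TensorAlgebra MulOpposite

variable (k : Type*) [Field k] (V : Type*) [AddCommGroup V] [Module k V]

local notation "T" => TensorAlgebra k V

variable {k V}

/-- One step of the simultaneous recursion computing `(x, D x, E x)`. -/
noncomputable def step (v : V) : (T × T × T) →ₗ[k] (T × T × T) where
  toFun p := (p.1 * ι k v,
    p.2.1 * ι k v - ι k v * p.2.1 + algebraMapInv p.1 • ι k v,
    p.2.2 * ι k v + p.1 * ι k v)
  map_add' p q := by
    simp only [Prod.fst_add, Prod.snd_add, map_add, add_smul, Prod.mk_add_mk, add_mul, mul_add]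
    refine Prod.ext ?_ (Prod.ext ?_ ?_) <;> simp <;> abel
  map_smul' c p := by
    simp only [Prod.smul_fst, Prod.smul_snd, map_smul, smul_eq_mul, Prod.smul_mk,
      smul_mul_assoc, mul_smul_comm, mul_smul]
    refine Prod.ext ?_ (Prod.ext ?_ ?_) <;> simp [smul_sub, smul_add]

@[simp] lemma step_apply (v : V) (p : T × T × T) :
    step v p = (p.1 * ι k v,
      p.2.1 * ι k v - ι k v * p.2.1 + algebraMapInv p.1 • ι k v,
      p.2.2 * ι k v + p.1 * ι k v) := rfl

noncomputable def stepL : V →ₗ[k] (Module.End k (T × T × T))ᵐᵒᵖ where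
  toFun v := op (step v)
  map_add' v w := by
    have h : step (k := k) (V := V) (v + w) = step v + step w := by
      apply LinearMap.ext; intro p
      refine Prod.ext ?_ (Prod.ext ?_ ?_) <;>
        simp only [step_apply, LinearMap.add_apply, map_add, add_smul, Prod.fst_add,
          Prod.snd_add, mul_add, add_mul, smul_add] <;> abel
    show op (step (v + w)) = op (step v) + op (step w)
    rw [h, op_add]
  map_smul' c v := by
    have h : step (k := k) (V := V) (c • v) = c • step v := by
      apply LinearMap.ext; intro p
      refine Prod.ext ?_ (Prod.ext ?_ ?_)
      · simp only [step_apply, LinearMap.smul_apply, Prod.smul_fst, map_smul, mul_smul_comm]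
      · simp only [step_apply, LinearMap.smul_apply, Prod.smul_fst, Prod.smul_snd, map_smul,
          mul_smul_comm, smul_mul_assoc, smul_sub, smul_add,
          smul_comm (algebraMapInv p.1) c (ι k v)]
      · simp only [step_apply, LinearMap.smul_apply, Prod.smul_fst, Prod.smul_snd, map_smul,
          mul_smul_comm, smul_mul_assoc, smul_add]
    show op (step (c • v)) = c • op (step v)
    rw [h, op_smul]

noncomputable def Phi : TensorAlgebra k V →ₐ[k] (Module.End k (T × T × T))ᵐᵒᵖ :=
  TensorAlgebra.lift k stepL

noncomputable def DfullL : T →ₗ[k] T × T × T where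
  toFun x := (Phi x).unop (1, 0, 0)
  map_add' x y := by simp
  map_smul' c x := by simp

lemma DfullL_algebraMap (r : k) :
    DfullL (algebraMap k T r) = (algebraMap k T r, 0, 0) := by
  simp only [DfullL, LinearMap.coe_mk, AddHom.coe_mk, AlgHom.commutes]
  rw [MulOpposite.algebraMap_apply, unop_op]
  simp [Module.algebraMap_end_apply, Prod.smul_mk, Algebra.algebraMap_eq_smul_one]

lemma DfullL_one : DfullL (1 : T) = (1, 0, 0) := by
  simpa using DfullL_algebraMap (1 : k)

lemma DfullL_mul (x y : T) : DfullL (x * y) = (Phi y).unop (DfullL x) := by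
  simp only [DfullL, LinearMap.coe_mk, AddHom.coe_mk, map_mul, unop_mul]
  rfl

lemma DfullL_fst (x : T) : ∀ p : T × T × T, ((Phi x).unop p).1 = p.1 * x := by
  induction x using TensorAlgebra.induction with
  | algebraMap r =>
    intro p
    rw [AlgHom.commutes, MulOpposite.algebraMap_apply, unop_op]
    simp [Module.algebraMap_end_apply, Algebra.commutes, Algebra.smul_def]
  | ι v => intro p; simp [Phi, stepL]
  | mul a b ha hb => intro p; rw [map_mul, unop_mul]; simp [Module.End.mul_apply, hb, ha, mul_assoc]
  | add a b ha hb => intro p; rw [map_add, unop_add]; simp [ha, hb, mul_add]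

lemma DfullL_fst' (x : T) : (DfullL x).1 = x := by
  simpa [DfullL] using DfullL_fst x (1, 0, 0)

noncomputable def Dop : T →ₗ[k] T :=
  (LinearMap.fst k T T).comp ((LinearMap.snd k T (T × T)).comp DfullL)

noncomputable def Eop : T →ₗ[k] T :=
  (LinearMap.snd k T T).comp ((LinearMap.snd k T (T × T)).comp DfullL)

lemma Dop_mul_ι (x : T) (v : V) :
    Dop (x * ι k v) = ⁅Dop x, ι k v⁆ + algebraMapInv x • ι k v := by
  have h := DfullL_mul x (ι k v)
  have hfst := DfullL_fst' x
  simp only [Phi, TensorAlgebra.lift_ι_apply] at h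
  simp only [stepL, LinearMap.coe_mk, AddHom.coe_mk, unop_op] at h
  simp only [Dop, LinearMap.comp_apply, LinearMap.fst_apply, LinearMap.snd_apply, h, step,
    LinearMap.coe_mk, AddHom.coe_mk, hfst, Ring.lie_def]

lemma Eop_mul_ι (x : T) (v : V) :
    Eop (x * ι k v) = Eop x * ι k v + x * ι k v := by
  have h := DfullL_mul x (ι k v)
  have hfst := DfullL_fst' x
  simp only [Phi, TensorAlgebra.lift_ι_apply] at h
  simp only [stepL, LinearMap.coe_mk, AddHom.coe_mk, unop_op] at h
  simp only [Eop, LinearMap.comp_apply, LinearMap.fst_apply, LinearMap.snd_apply, h, step,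
    LinearMap.coe_mk, AddHom.coe_mk, hfst]

lemma Dop_algebraMap (r : k) : Dop (algebraMap k T r) = 0 := by
  simp [Dop, DfullL_algebraMap]

lemma Eop_algebraMap (r : k) : Eop (algebraMap k T r) = 0 := by
  simp [Eop, DfullL_algebraMap]

lemma Dop_one : Dop (1 : T) = 0 := by
  simpa using Dop_algebraMap (k := k) (V := V) 1

lemma Eop_one : Eop (1 : T) = 0 := by
  simpa using Eop_algebraMap (k := k) (V := V) 1

lemma Dop_ι (v : V) : Dop (ι k v) = ι k v := by
  have := Dop_mul_ι (1 : T) v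
  simpa [Dop_one, ← Algebra.algebraMap_eq_smul_one] using this

lemma Eop_ι (v : V) : Eop (ι k v) = ι k v := by
  have := Eop_mul_ι (1 : T) v
  simpa [Eop_one] using this

lemma algebraMapInv_ι (v : V) : algebraMapInv (ι k v) = 0 := by
  simp [TensorAlgebra.algebraMapInv]

/-- The Euler operator is a derivation. -/
lemma Eop_mul (y x : T) : Eop (x * y) = Eop x * y + x * Eop y := by
  induction y using TensorAlgebra.induction generalizing x with
  | algebraMap r =>
    rw [Eop_algebraMap, mul_zero, add_zero, ← Algebra.commutes r x, ← Algebra.smul_def,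
      map_smul, Algebra.smul_def, Algebra.commutes]
  | ι v => rw [Eop_mul_ι, Eop_ι]
  | mul a b ha hb =>
    rw [← mul_assoc, hb, ha, hb a]
    noncomm_ring
  | add a b ha hb => simp only [mul_add, map_add, ha, hb]; abel

variable (k V)

/-- The set of elements on which the Dynkin identity machinery works, as a Lie subalgebra. -/
noncomputable def G : LieSubalgebra k (TensorAlgebra k V) where
  carrier := {a | algebraMapInv a = (0 : k) ∧ Dop a = Eop a ∧
    ∀ u : T, algebraMapInv u = (0 : k) → Dop (u * a) = ⁅Dop u, a⁆}
  add_mem' := by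
    rintro a b ⟨ha1, ha2, ha3⟩ ⟨hb1, hb2, hb3⟩
    refine ⟨by simp [ha1, hb1], by simp [ha2, hb2], fun u hu => ?_⟩
    rw [mul_add, map_add, ha3 u hu, hb3 u hu, lie_add]
  zero_mem' := by
    refine ⟨by simp, by simp, fun u hu => by simp⟩
  smul_mem' := by
    rintro c a ⟨ha1, ha2, ha3⟩
    refine ⟨by simp [ha1], by simp [ha2], fun u hu => ?_⟩
    rw [mul_smul_comm, map_smul, ha3 u hu, lie_smul]
  lie_mem' := by
    rintro a b ⟨ha1, ha2, ha3⟩ ⟨hb1, hb2, hb3⟩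
    have key : ∀ u : T, algebraMapInv u = (0 : k) → Dop (u * ⁅a, b⁆) = ⁅Dop u, ⁅a, b⁆⁆ := by
      intro u hu
      have hua : algebraMapInv (u * a) = (0 : k) := by simp [map_mul, hu]
      have hub : algebraMapInv (u * b) = (0 : k) := by simp [map_mul, hu]
      rw [Ring.lie_def, mul_sub, map_sub, ← mul_assoc, ← mul_assoc,
        hb3 (u * a) hua, ha3 (u * b) hub, ha3 u hu, hb3 u hu]
      simp only [Ring.lie_def]
      noncomm_ring
    refine ⟨?_, ?_, key⟩
    · simp [Ring.lie_def, map_mul, ha1]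
    · have hda : Dop (a * b) = ⁅Dop a, b⁆ := hb3 a ha1
      have hdb : Dop (b * a) = ⁅Dop b, a⁆ := ha3 b hb1
      rw [Ring.lie_def, map_sub, hda, hdb, ha2, hb2, map_sub, Eop_mul b a, Eop_mul a b]
      simp only [Ring.lie_def]
      noncomm_ring

lemma lieSpan_le_G :
    LieSubalgebra.lieSpan k (TensorAlgebra k V) (Set.range (ι k (M := V))) ≤ G k V := by
  rw [LieSubalgebra.lieSpan_le]
  rintro x ⟨v, rfl⟩
  refine ⟨algebraMapInv_ι v, by rw [Dop_ι, Eop_ι], fun u hu => ?_⟩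
  rw [Dop_mul_ι, hu, zero_smul, add_zero]

variable {k V}

/-- Euler operator on the degree-`n` part. -/
lemma Eop_pow {n : ℕ} {x : T} (hx : x ∈ (LinearMap.range (ι k (M := V))) ^ n) :
    Eop x = (n : k) • x := by
  induction hx using Submodule.pow_induction_on_right' with
  | algebraMap r => simp [Eop_algebraMap]
  | add x y i hx hy ihx ihy => rw [map_add, ihx, ihy, smul_add]
  | mul_mem i x hx ih m hm =>
    obtain ⟨v, rfl⟩ := hm
    rw [Eop_mul_ι, ih, smul_mul_assoc, Nat.cast_succ, add_smul, one_smul]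

/-- Degree-`n` products of generators. -/
def Sset (n : ℕ) : Set T :=
  {y | ∃ v : Fin n → V, y = (List.ofFn fun i => ι k (v i)).prod}

lemma pow_le_span_Sset (n : ℕ) :
    (LinearMap.range (ι k (M := V))) ^ n ≤ Submodule.span k (Sset (k := k) (V := V) n) := by
  intro x hx
  induction hx using Submodule.pow_induction_on_right' with
  | algebraMap r =>
    have h1 : (1 : T) ∈ Sset (k := k) (V := V) 0 := ⟨fun i => i.elim0, by simp⟩
    rw [Algebra.algebraMap_eq_smul_one]
    exact Submodule.smul_mem _ _ (Submodule.subset_span h1)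
  | add x y i hx hy ihx ihy => exact Submodule.add_mem _ ihx ihy
  | mul_mem i x hx ih m hm =>
    obtain ⟨v', rfl⟩ := hm
    refine Submodule.span_induction (p := fun z _ => z * ι k v' ∈
        Submodule.span k (Sset (k := k) (V := V) (i + 1))) ?_ ?_ ?_ ?_ ih
    · rintro z ⟨v, rfl⟩
      refine Submodule.subset_span ⟨Fin.snoc v v', ?_⟩
      rw [List.ofFn_succ' fun j => ι k (Fin.snoc v v' j)]
      simp [List.prod_concat, Fin.snoc_castSucc, Fin.snoc_last]
    · simp
    · intro y z _ _ hy hz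
      rw [add_mul]; exact Submodule.add_mem _ hy hz
    · intro c y _ hy
      rw [smul_mul_assoc]; exact Submodule.smul_mem _ _ hy

/-- The main list computation: for a nonempty list of generators,
`Dop` of the product is the left-normed bracket, which lies in the Lie span
and in the correct degree component. -/
lemma list_lemma (l : List V) (hl : l ≠ []) :
    Dop ((l.map (ι k)).prod) = lnbList (l.map (ι k)) ∧
    algebraMapInv ((l.map (ι k)).prod) = (0 : k) ∧
    lnbList (l.map (ι k)) ∈
      LieSubalgebra.lieSpan k (TensorAlgebra k V) (Set.range (ι k (M := V))) ∧
    lnbList (l.map (ι k)) ∈ (LinearMap.range (ι k (M := V))) ^ l.length := by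
  induction l using List.reverseRecOn with
  | nil => exact absurd rfl hl
  | append_singleton l a ih =>
    cases l with
    | nil =>
      have h1 : Dop (ι k a) = ι k a := Dop_ι a
      refine ⟨by simpa [lnbList] using h1, by simpa using algebraMapInv_ι (k := k) a, ?_, ?_⟩
      · simpa [lnbList] using LieSubalgebra.subset_lieSpan (R := k)
          (L := TensorAlgebra k V) (Set.mem_range_self (f := ι k (M := V)) a)
      · simpa [lnbList] using (LinearMap.mem_range_self (ι k) a)
    | cons b l' =>
      obtain ⟨ih1, ih2, ih3, ih4⟩ := ih (by simp)
      have hmap : ((b :: l') ++ [a]).map (ι k) = (ι k b :: l'.map (ι k)) ++ [ι k a] := by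
        simp
      have hlnb : lnbList (((b :: l') ++ [a]).map (ι k)) =
          ⁅lnbList ((b :: l').map (ι k)), ι k a⁆ := by
        rw [hmap]
        show List.foldl _ (ι k b) (l'.map (ι k) ++ [ι k a]) = _
        rw [List.foldl_append]
        simp [lnbList, Ring.lie_def]
      have hprod : (((b :: l') ++ [a]).map (ι k)).prod =
          ((b :: l').map (ι k)).prod * ι k a := by
        simp [mul_assoc]
      refine ⟨?_, ?_, ?_, ?_⟩
      · rw [hprod, hlnb, Dop_mul_ι, ih2, zero_smul, add_zero, ih1]
      · rw [hprod, map_mul, ih2, zero_mul]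
      · rw [hlnb]
        exact LieSubalgebra.lie_mem _ ih3 (LieSubalgebra.subset_lieSpan ⟨a, rfl⟩)
      · rw [hlnb, Ring.lie_def, List.length_append, List.length_singleton]
        refine sub_mem ?_ ?_
        · rw [pow_succ]
          exact Submodule.mul_mem_mul ih4 (LinearMap.mem_range_self _ a)
        · rw [pow_succ']
          exact Submodule.mul_mem_mul (LinearMap.mem_range_self _ a) ih4

end Stmt2Aux

/-- For a vector space `V` over a field of characteristic zero, the image of the
left-normed bracketing map `V^{⊗n} → T(V)`, `v₁⊗⋯⊗vₙ ↦ [...[v₁,v₂],...,vₙ]`, equals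
the degree-`n` homogeneous component `Lₙ(V)` of the free Lie algebra on `V` inside
the tensor algebra, i.e. the intersection of the Lie subalgebra generated by `V`
with the degree-`n` component `V^{⊗n}`. -/
theorem stmt2 (k : Type*) [Field k] [CharZero k] (V : Type*) [AddCommGroup V] [Module k V]
    (n : ℕ) (hn : 0 < n)
    (w : TensorAlgebra k V →ₗ[k] TensorAlgebra k V)
    (hw : ∀ v : Fin n → V,
      w ((List.ofFn fun i => TensorAlgebra.ι k (v i)).prod) =
        lnbList (List.ofFn fun i => TensorAlgebra.ι k (v i))) :
    Submodule.map w
        (LinearMap.range (TensorAlgebra.ι k (M := V)) ^ n) =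
      LieSubalgebra.toSubmodule
          (LieSubalgebra.lieSpan k (TensorAlgebra k V)
            (Set.range (TensorAlgebra.ι k (M := V)))) ⊓
        LinearMap.range (TensorAlgebra.ι k (M := V)) ^ n := by
  classical
  have hspan := Stmt2Aux.pow_le_span_Sset (k := k) (V := V) n
  have key : ∀ v : Fin n → V,
      Stmt2Aux.Dop ((List.ofFn fun i => TensorAlgebra.ι k (v i)).prod) =
        lnbList (List.ofFn fun i => TensorAlgebra.ι k (v i)) ∧
      lnbList (List.ofFn fun i => TensorAlgebra.ι k (v i)) ∈
        LieSubalgebra.lieSpan k (TensorAlgebra k V)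
          (Set.range (TensorAlgebra.ι k (M := V))) ∧
      lnbList (List.ofFn fun i => TensorAlgebra.ι k (v i)) ∈
        LinearMap.range (TensorAlgebra.ι k (M := V)) ^ n := by
    intro v
    have hne : (List.ofFn v) ≠ [] :=
      List.ne_nil_of_length_pos (by simpa using hn)
    obtain ⟨h1, h2, h3, h4⟩ := Stmt2Aux.list_lemma (k := k) (List.ofFn v) hne
    have hmap : (List.ofFn v).map (TensorAlgebra.ι k) =
        List.ofFn fun i => TensorAlgebra.ι k (v i) := by
      rw [List.map_ofFn]; rfl
    rw [hmap] at h1 h3 h4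
    rw [List.length_ofFn] at h4
    exact ⟨h1, h3, h4⟩
  have hwD : ∀ x ∈ LinearMap.range (TensorAlgebra.ι k (M := V)) ^ n,
      w x = Stmt2Aux.Dop x := by
    intro x hx
    refine Submodule.span_induction (p := fun z _ => w z = Stmt2Aux.Dop z)
      ?_ ?_ ?_ ?_ (hspan hx)
    · rintro z ⟨v, rfl⟩
      rw [hw v, (key v).1]
    · simp
    · intro y z _ _ hy hz; rw [map_add, map_add, hy, hz]
    · intro c y _ hy; rw [map_smul, map_smul, hy]
  apply le_antisymm
  · rintro _ ⟨x, hx, rfl⟩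
    refine Submodule.span_induction (p := fun z _ => w z ∈
        LieSubalgebra.toSubmodule
          (LieSubalgebra.lieSpan k (TensorAlgebra k V)
            (Set.range (TensorAlgebra.ι k (M := V)))) ⊓
        LinearMap.range (TensorAlgebra.ι k (M := V)) ^ n)
      ?_ ?_ ?_ ?_ (hspan hx)
    · rintro z ⟨v, rfl⟩
      rw [hw v]
      exact Submodule.mem_inf.mpr ⟨(key v).2.1, (key v).2.2⟩
    · simp
    · intro y z _ _ hy hz
      rw [map_add]; exact Submodule.add_mem _ hy hz
    · intro c y _ hy
      rw [map_smul]; exact Submodule.smul_mem _ _ hy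
  · intro x hx
    rw [Submodule.mem_inf] at hx
    obtain ⟨hxL, hxP⟩ := hx
    have hG := Stmt2Aux.lieSpan_le_G k V hxL
    have hDE : Stmt2Aux.Dop x = Stmt2Aux.Eop x := hG.2.1
    have hE := Stmt2Aux.Eop_pow hxP
    have hne : (n : k) ≠ 0 := Nat.cast_ne_zero.mpr hn.ne'
    refine Submodule.mem_map.mpr ⟨(n : k)⁻¹ • x, Submodule.smul_mem _ _ hxP, ?_⟩
    rw [map_smul, hwD x hxP, hDE, hE, smul_smul, inv_mul_cancel₀ hne, one_smul]
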